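/- arXiv:2012.07054 — 2 statements merged into one kernel-verified Lean document; each statement's English description precedes it below -/
import Mathlib

section
/- Let f : ℝⁿ → ℝ be convex and μ-smooth, A an n×d matrix, λ > 0, S a d×m matrix, and P_S = S(SᵀS)†Sᵀ the orthogonal projector onto the range of S. If α* minimizes α ↦ f(ASα) + (λ/2)‖Sα‖² and y* = ∇f(ASα*), then SᵀSα* = -(1/λ)SᵀAᵀy*, and y* minimizes y ↦ f*(y) + (1/(2λ))‖P_S Aᵀ y‖². -/
open scoped RealInnerProductSpace
open Matrix MeasureTheory ProbabilityTheory

noncomputable section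

abbrev EuclR (n : ℕ) := EuclideanSpace ℝ (Fin n)

def matVec {p q : ℕ} (M : Matrix (Fin p) (Fin q) ℝ) (x : EuclR q) : EuclR p :=
  Matrix.toEuclideanLin M x

def matCLM {p q : ℕ} (M : Matrix (Fin p) (Fin q) ℝ) : EuclR q →L[ℝ] EuclR p :=
  LinearMap.toContinuousLinearMap (Matrix.toEuclideanLin M)

def ranM {p q : ℕ} (M : Matrix (Fin p) (Fin q) ℝ) : Submodule ℝ (EuclR p) :=
  LinearMap.range (Matrix.toEuclideanLin M)

def projOn {p : ℕ} (K : Submodule ℝ (EuclR p)) (x : EuclR p) : EuclR p :=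
  (K.orthogonalProjection x : EuclR p)

def perpCLM {p : ℕ} (K : Submodule ℝ (EuclR p)) : EuclR p →L[ℝ] EuclR p :=
  ContinuousLinearMap.id ℝ (EuclR p) - K.subtypeL.comp (K.orthogonalProjection)

def fconj {p : ℕ} (f : EuclR p → ℝ) (z : EuclR p) : EReal :=
  ⨆ w : EuclR p, ((⟪w, z⟫ - f w : ℝ) : EReal)

def fdom {p : ℕ} (f : EuclR p → ℝ) : Set (EuclR p) := {z | fconj f z ≠ ⊤}

def tcone {p : ℕ} (f : EuclR p → ℝ) (z : EuclR p) : Set (EuclR p) :=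
  {Δ | ∃ t : ℝ, 0 ≤ t ∧ ∃ y ∈ fdom f, Δ = t • (y - z)}

def ZfVal {n d m : ℕ} (f : EuclR n → ℝ) (zs : EuclR n)
    (A : Matrix (Fin n) (Fin d) ℝ) (S : Matrix (Fin d) (Fin m) ℝ) : ℝ :=
  sSup ((fun Δ => ‖matVec Aᵀ Δ - projOn (ranM S) (matVec Aᵀ Δ)‖) ''
    (tcone f zs ∩ Metric.closedBall 0 1))

/- ### Auxiliary lemmas -/

lemma matVec_adj {p q : ℕ} (M : Matrix (Fin p) (Fin q) ℝ) (u : EuclR p) (v : EuclR q) :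
    ⟪matVec Mᵀ u, v⟫ = ⟪u, matVec M v⟫ := by
  have h : Mᵀ = Mᴴ := (Matrix.conjTranspose_eq_transpose_of_trivial M).symm
  rw [matVec, matVec, h, Matrix.toEuclideanLin_conjTranspose_eq_adjoint,
    LinearMap.adjoint_inner_left]

lemma matVec_mul {p q r : ℕ} (M : Matrix (Fin p) (Fin q) ℝ) (N : Matrix (Fin q) (Fin r) ℝ)
    (x : EuclR r) : matVec (M * N) x = matVec M (matVec N x) := by
  simp [matVec, Matrix.toEuclideanLin_eq_toLin, Matrix.toLin_mul _ (PiLp.basisFun 2 ℝ (Fin q)) _]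

lemma matVec_add {p q : ℕ} (M : Matrix (Fin p) (Fin q) ℝ) (x y : EuclR q) :
    matVec M (x + y) = matVec M x + matVec M y := by simp [matVec]

lemma matVec_smul {p q : ℕ} (M : Matrix (Fin p) (Fin q) ℝ) (c : ℝ) (x : EuclR q) :
    matVec M (c • x) = c • matVec M x := by simp [matVec]

lemma matCLM_apply {p q : ℕ} (M : Matrix (Fin p) (Fin q) ℝ) (x : EuclR q) :
    matCLM M x = matVec M x := rfl

lemma grad_ineq {p : ℕ} {f : EuclR p → ℝ} (hconv : ConvexOn ℝ Set.univ f) {x g : EuclR p}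
    (hg : HasGradientAt f g x) (w : EuclR p) : f x + ⟪g, w - x⟫ ≤ f w := by
  set d := w - x with hd
  have hc : ∀ t : ℝ, HasDerivAt (fun t : ℝ => x + t • d) d t := by
    intro t
    simpa using ((hasDerivAt_id t).smul_const d).const_add x
  have hφ : HasDerivAt (fun t : ℝ => f (x + t • d)) ⟪g, d⟫ 0 := by
    have hx0 : x = x + (0:ℝ) • d := by simp
    rw [hx0] at hg
    have := hg.hasFDerivAt.comp_hasDerivAt 0 (hc 0)
    simpa [InnerProductSpace.toDual_apply_apply, Function.comp_def] using this
  have hconvφ : ConvexOn ℝ Set.univ (fun t : ℝ => f (x + t • d)) := by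
    have h := hconv.comp_affineMap (AffineMap.lineMap x (x + d) : ℝ →ᵃ[ℝ] EuclR p)
    have he : (f ∘ (AffineMap.lineMap x (x + d) : ℝ →ᵃ[ℝ] EuclR p)) =
        fun t : ℝ => f (x + t • d) := by
      funext t; simp [AffineMap.lineMap_apply, add_comm]
    rw [he] at h
    simpa using h
  have hs := hconvφ.le_slope_of_hasDerivAt (Set.mem_univ 0) (Set.mem_univ 1) one_pos hφ
  rw [slope_def_field] at hs
  simp only [zero_smul, add_zero, one_smul] at hs
  have h2 : ⟪g, d⟫ ≤ f (x + d) - f x := by simpa [div_one] using hs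
  have hxd : x + d = w := by rw [hd]; abel
  rw [hxd] at h2; linarith

/-- KKT conditions of the sketched primal and optimality of the sketched dual. -/
theorem sketched_fenchel_duality (n d m : ℕ) (f : EuclR n → ℝ) (μ lam : ℝ)
    (hμ : 0 < μ) (hlam : 0 < lam)
    (hconv : ConvexOn ℝ Set.univ f)
    (hdiff : ∀ x, HasGradientAt f (gradient f x) x)
    (hsmooth : ∀ x y, ‖gradient f y - gradient f x‖ ≤ μ * ‖y - x‖)
    (A : Matrix (Fin n) (Fin d) ℝ) (S : Matrix (Fin d) (Fin m) ℝ)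
    (αs : EuclR m)
    (hαs : ∀ α, f (matVec (A * S) αs) + lam / 2 * ‖matVec S αs‖ ^ 2
        ≤ f (matVec (A * S) α) + lam / 2 * ‖matVec S α‖ ^ 2)
    (ys : EuclR n) (hys : ys = gradient f (matVec (A * S) αs)) :
    matVec (Sᵀ * S) αs = (-(1 / lam)) • matVec (Sᵀ * Aᵀ) ys ∧
    (∀ y, fconj f ys + ((1 / (2 * lam) * ‖projOn (ranM S) (matVec Aᵀ ys)‖ ^ 2 : ℝ) : EReal)
        ≤ fconj f y + ((1 / (2 * lam) * ‖projOn (ranM S) (matVec Aᵀ y)‖ ^ 2 : ℝ) : EReal)) := by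
  have hlam' : lam ≠ 0 := hlam.ne'
  set xs : EuclR n := matVec (A * S) αs with hxs
  have hgys : HasGradientAt f ys xs := hys ▸ hdiff xs
  -- derivative of the primal objective at αs
  have h1 : HasFDerivAt (fun α : EuclR m => f (matVec (A * S) α))
      ((InnerProductSpace.toDual ℝ (EuclR n) ys).comp (matCLM (A * S))) αs :=
    (hgys.hasFDerivAt).comp αs ((matCLM (A * S)).hasFDerivAt)
  have h2 : HasFDerivAt (fun α : EuclR m => lam / 2 * ‖matVec S α‖ ^ 2)
      ((lam / 2) • (2 • (innerSL ℝ (matVec S αs)).comp (matCLM S))) αs :=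
    HasFDerivAt.const_mul ((matCLM S).hasFDerivAt.norm_sq) (lam / 2)
  have hD := h1.add h2
  have hmin : IsLocalMin (fun α : EuclR m =>
      f (matVec (A * S) α) + lam / 2 * ‖matVec S α‖ ^ 2) αs :=
    Filter.Eventually.of_forall hαs
  have hD0 := hmin.hasFDerivAt_eq_zero hD
  have hkkt : ∀ v : EuclR m, ⟪ys, matVec (A * S) v⟫ + lam * ⟪matVec S αs, matVec S v⟫ = 0 := by
    intro v
    have h := congrFun (congrArg (DFunLike.coe) hD0) v
    simp only [ContinuousLinearMap.add_apply, ContinuousLinearMap.coe_smul',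
      Pi.smul_apply, ContinuousLinearMap.coe_comp', Function.comp_apply,
      ContinuousLinearMap.smul_apply, innerSL_apply_apply, ContinuousLinearMap.zero_apply,
      InnerProductSpace.toDual_apply_apply, matCLM_apply, smul_eq_mul, nsmul_eq_mul, Nat.cast_ofNat] at h
    nlinarith [h]
  -- the KKT vector vanishes
  have hG0 : matVec Sᵀ (matVec Aᵀ ys) + lam • matVec Sᵀ (matVec S αs) = 0 := by
    have hGv : ∀ v : EuclR m,
        ⟪matVec Sᵀ (matVec Aᵀ ys) + lam • matVec Sᵀ (matVec S αs), v⟫ = 0 := by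
      intro v
      rw [inner_add_left, real_inner_smul_left, matVec_adj, matVec_adj, matVec_adj,
        ← matVec_mul]
      exact hkkt v
    exact inner_self_eq_zero.mp (hGv _)
  -- Statement 1
  have hst1 : matVec (Sᵀ * S) αs = (-(1 / lam)) • matVec (Sᵀ * Aᵀ) ys := by
    rw [matVec_mul, matVec_mul]
    have hA : lam • matVec Sᵀ (matVec S αs) = - matVec Sᵀ (matVec Aᵀ ys) := by
      have := hG0
      linear_combination (norm := module) this
    calc matVec Sᵀ (matVec S αs)
        = (1 / lam) • (lam • matVec Sᵀ (matVec S αs)) := by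
          rw [smul_smul]; rw [one_div, inv_mul_cancel₀ hlam', one_smul]
      _ = (1 / lam) • (- matVec Sᵀ (matVec Aᵀ ys)) := by rw [hA]
      _ = (-(1 / lam)) • matVec Sᵀ (matVec Aᵀ ys) := by rw [smul_neg, neg_smul]
  refine ⟨hst1, ?_⟩
  -- projection facts
  set K : Submodule ℝ (EuclR d) := ranM S with hK
  set ss : EuclR d := matVec S αs with hss
  have hmemK : ss ∈ K := ⟨αs, rfl⟩
  have hperp : matVec Aᵀ ys + lam • ss ∈ Kᗮ := by
    rw [Submodule.mem_orthogonal]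
    rintro u ⟨β, rfl⟩
    have hu : Matrix.toEuclideanLin S β = matVec S β := rfl
    rw [hu, real_inner_comm, ← matVec_adj]
    have hexp : matVec Sᵀ (matVec Aᵀ ys + lam • ss) = 0 := by
      rw [matVec_add, matVec_smul]; exact hG0
    rw [hexp, inner_zero_left]
  have hproj_mem : ∀ u ∈ K, projOn K u = u := by
    intro u hu
    exact congrArg Subtype.val (Submodule.orthogonalProjectionOnto_mem_subspace_eq_self (⟨u, hu⟩ : K))
  have hproj_perp : ∀ u ∈ Kᗮ, projOn K u = 0 := by
    intro u hu
    unfold projOn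
    rw [Submodule.orthogonalProjectionOnto_apply_of_mem_orthogonal hu]
    rfl
  have hproj_ys : projOn K (matVec Aᵀ ys) = (-lam) • ss := by
    have hdecomp : matVec Aᵀ ys = (matVec Aᵀ ys + lam • ss) + (-lam) • ss := by
      module
    rw [hdecomp]
    unfold projOn
    rw [map_add, _root_.map_smul, Submodule.coe_add, Submodule.coe_smul]
    have e1 : ((K.orthogonalProjection (matVec Aᵀ ys + lam • ss) : K) : EuclR d) = 0 :=
      hproj_perp _ hperp
    have e2 : ((K.orthogonalProjection ss : K) : EuclR d) = ss := hproj_mem _ hmemK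
    rw [e1, e2, zero_add]
  -- inner products with xs
  have hxs_inner : ∀ z : EuclR n, ⟪xs, z⟫ = ⟪projOn K (matVec Aᵀ z), ss⟫ := by
    intro z
    have h1 : ⟪xs, z⟫ = ⟪matVec Aᵀ z, ss⟫ := by
      rw [hxs, matVec_mul, ← hss, real_inner_comm, ← matVec_adj, real_inner_comm]
    have h2 : ⟪matVec Aᵀ z - projOn K (matVec Aᵀ z), ss⟫ = 0 :=
      K.starProjection_inner_eq_zero (matVec Aᵀ z) ss hmemK
    rw [inner_sub_left] at h2
    rw [h1]; linarith [h2]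
  have hinner_ys : ⟪xs, ys⟫ = -lam * ‖ss‖ ^ 2 := by
    rw [hxs_inner ys, hproj_ys, real_inner_smul_left, real_inner_self_eq_norm_sq]
  have hnorm_ys : ‖projOn K (matVec Aᵀ ys)‖ ^ 2 = lam ^ 2 * ‖ss‖ ^ 2 := by
    rw [hproj_ys, norm_smul]
    simp [mul_pow, abs_of_pos hlam]
  -- value of the conjugate at ys
  have hfys : fconj f ys = ((⟪xs, ys⟫ - f xs : ℝ) : EReal) := by
    apply le_antisymm
    · apply iSup_le
      intro w
      apply EReal.coe_le_coe_iff.mpr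
      have hgi := grad_ineq hconv hgys w
      rw [inner_sub_right] at hgi
      have hc1 := real_inner_comm w ys
      have hc2 := real_inner_comm xs ys
      linarith [hgi, hc1, hc2]
    · exact le_iSup (fun w : EuclR n => ((⟪w, ys⟫ - f w : ℝ) : EReal)) xs
  intro y
  have hlb : ((⟪xs, y⟫ - f xs : ℝ) : EReal) ≤ fconj f y :=
    le_iSup (fun w : EuclR n => ((⟪w, y⟫ - f w : ℝ) : EReal)) xs
  set Py : EuclR d := projOn K (matVec Aᵀ y) with hPy
  have hreal : ⟪xs, ys⟫ - f xs + 1 / (2 * lam) * ‖projOn K (matVec Aᵀ ys)‖ ^ 2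
      ≤ ⟪xs, y⟫ - f xs + 1 / (2 * lam) * ‖Py‖ ^ 2 := by
    have hsq : (0:ℝ) ≤ ‖Py + lam • ss‖ ^ 2 := sq_nonneg _
    have hexp : ‖Py + lam • ss‖ ^ 2
        = ‖Py‖ ^ 2 + 2 * (lam * ⟪Py, ss⟫) + lam ^ 2 * ‖ss‖ ^ 2 := by
      rw [← real_inner_self_eq_norm_sq, inner_add_add_self]
      simp only [real_inner_smul_left, real_inner_smul_right, real_inner_self_eq_norm_sq]
      rw [real_inner_comm ss Py, norm_smul, Real.norm_eq_abs, mul_pow, sq_abs]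
      ring
    rw [hinner_ys, hnorm_ys, hxs_inner y, ← hPy]
    have h2l : (0:ℝ) < 2 * lam := by linarith
    have key : ⟪Py, ss⟫ - f xs + 1 / (2 * lam) * ‖Py‖ ^ 2
        - (-lam * ‖ss‖ ^ 2 - f xs + 1 / (2 * lam) * (lam ^ 2 * ‖ss‖ ^ 2))
        = ‖Py + lam • ss‖ ^ 2 / (2 * lam) := by
      rw [hexp]; field_simp; ring
    linarith [div_nonneg hsq h2l.le, key]
  calc fconj f ys + ((1 / (2 * lam) * ‖projOn (ranM S) (matVec Aᵀ ys)‖ ^ 2 : ℝ) : EReal)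
      = ((⟪xs, ys⟫ - f xs + 1 / (2 * lam) * ‖projOn K (matVec Aᵀ ys)‖ ^ 2 : ℝ) : EReal) := by
        rw [hfys, ← EReal.coe_add]
    _ ≤ ((⟪xs, y⟫ - f xs + 1 / (2 * lam) * ‖Py‖ ^ 2 : ℝ) : EReal) :=
        EReal.coe_le_coe_iff.mpr hreal
    _ ≤ fconj f y + ((1 / (2 * lam) * ‖projOn (ranM S) (matVec Aᵀ y)‖ ^ 2 : ℝ) : EReal) := by
        rw [EReal.coe_add]
        exact add_le_add_left hlb _
end
end

section
/- Let f : ℝⁿ → ℝ be convex and L-Lipschitz (not necessarily differentiable), A an n×d matrix, λ > 0, and S a d×m matrix with projector P_S. Let z* be a minimizer of z ↦ f*(z) + (1/(2λ))‖Aᵀz‖² and y* a minimizer of y ↦ f*(y) + (1/(2λ))‖P_S Aᵀ y‖². Set x* = -(1/λ)Aᵀz* and x̂¹ = -(1/λ)Aᵀy*, and Z_f = sup{‖P_S^⊥ Aᵀ Δ‖ : Δ ∈ T_{z*} ∩ B₂ⁿ}. Then ‖x̂¹ - x*‖ ≤ (2L/λ)·√(Z_f² + (1/2)·Z_f·‖P_S^⊥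 Aᵀ‖₂) ≤ √6·(L/λ)·‖P_S^⊥ Aᵀ‖₂. -/
open scoped RealInnerProductSpace
open Matrix MeasureTheory ProbabilityTheory

noncomputable section

/- ---------- auxiliary lemmas ---------- -/

lemma le_fconj {p : ℕ} (f : EuclR p → ℝ) (z w : EuclR p) :
    ((⟪w, z⟫ - f w : ℝ) : EReal) ≤ fconj f z := le_iSup (fun w => ((⟪w, z⟫ - f w : ℝ) : EReal)) w

lemma fconj_ne_bot {p : ℕ} (f : EuclR p → ℝ) (z : EuclR p) :
    ((-(f 0) : ℝ) : EReal) ≤ fconj f z := by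
  have := le_fconj f z 0
  simpa using this

lemma ereal_exists_real {x : EReal} {lo hi : ℝ} (h1 : (lo : EReal) ≤ x)
    (h2 : x ≤ (hi : EReal)) : ∃ r : ℝ, x = (r : EReal) ∧ lo ≤ r ∧ r ≤ hi := by
  induction x using EReal.rec with
  | bot => exact absurd h1 (not_le.2 (EReal.bot_lt_coe lo))
  | top => exact absurd h2 (not_le.2 (EReal.coe_lt_top hi))
  | coe r => exact ⟨r, rfl, EReal.coe_le_coe_iff.1 h1, EReal.coe_le_coe_iff.1 h2⟩

lemma ereal_ne_top_exists_real {x : EReal} {lo : ℝ} (h1 : (lo : EReal) ≤ x)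
    (h2 : x ≠ ⊤) : ∃ r : ℝ, x = (r : EReal) := by
  induction x using EReal.rec with
  | bot => exact absurd h1 (not_le.2 (EReal.bot_lt_coe lo))
  | top => exact absurd rfl h2
  | coe r => exact ⟨r, rfl⟩

lemma fdom_norm_le {p : ℕ} {f : EuclR p → ℝ} {L : ℝ} (hL : 0 ≤ L)
    (hLip : ∀ x y, |f x - f y| ≤ L * ‖x - y‖) {z : EuclR p}
    (hz : fconj f z ≠ ⊤) : ‖z‖ ≤ L := by
  by_contra h
  push_neg at h
  apply hz
  rw [fconj, iSup_eq_top]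
  intro b hb
  have hc : 0 < ‖z‖ * (‖z‖ - L) := mul_pos (lt_of_le_of_lt hL h) (by linarith)
  induction b using EReal.rec with
  | bot => exact ⟨0, by exact_mod_cast EReal.bot_lt_coe _⟩
  | top => exact absurd hb (lt_irrefl _)
  | coe r =>
    set s : ℝ := max 0 ((r + f 0 + 1) / (‖z‖ * (‖z‖ - L))) with hs
    have hs0 : 0 ≤ s := le_max_left _ _
    have hsge : (r + f 0 + 1) / (‖z‖ * (‖z‖ - L)) ≤ s := le_max_right _ _
    have hsc : r + f 0 + 1 ≤ s * (‖z‖ * (‖z‖ - L)) := by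
      rw [div_le_iff₀ hc] at hsge; linarith [hsge]
    refine ⟨s • z, ?_⟩
    rw [EReal.coe_lt_coe_iff]
    have hip : ⟪s • z, z⟫ = s * ‖z‖ ^ 2 := by
      rw [real_inner_smul_left, real_inner_self_eq_norm_sq]
    have hf : f (s • z) ≤ f 0 + L * (s * ‖z‖) := by
      have := hLip (s • z) 0
      rw [sub_zero, norm_smul, Real.norm_eq_abs, abs_of_nonneg hs0] at this
      have := abs_le.1 this
      linarith [this.1, this.2]
    rw [hip]
    nlinarith [hf, hsc]

lemma exists_fconj_ne_top {p : ℕ} (f : EuclR p → ℝ)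
    (hconv : ConvexOn ℝ Set.univ f) (hcont : Continuous f) :
    ∃ g : EuclR p, fconj f g ≠ ⊤ := by
  set s : Set (EuclR p × ℝ) := {q | f q.1 < q.2} with hsdef
  have hs_open : IsOpen s := isOpen_lt (hcont.comp continuous_fst) continuous_snd
  have hs_conv : Convex ℝ s := by
    intro q hq q' hq' a b ha hb hab
    simp only [hsdef, Set.mem_setOf_eq] at *
    have hf := hconv.2 (Set.mem_univ q.1) (Set.mem_univ q'.1) ha hb hab
    have h1 : a * f q.1 ≤ a * q.2 := mul_le_mul_of_nonneg_left hq.le ha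
    have h2 : b * f q'.1 ≤ b * q'.2 := mul_le_mul_of_nonneg_left hq'.le hb
    rcases eq_or_lt_of_le ha with ha' | ha'
    · have hb' : b = 1 := by linarith
      calc f (a • q.1 + b • q'.1) ≤ a * f q.1 + b * f q'.1 := hf
        _ < a * q.2 + b * q'.2 := by
            have h3 : b * f q'.1 < b * q'.2 := by rw [hb']; simpa using hq'
            have h4 : a * f q.1 = a * q.2 := by rw [← ha']; ring
            linarith
    · calc f (a • q.1 + b • q'.1) ≤ a * f q.1 + b * f q'.1 := hf
        _ < a * q.2 + b * q'.2 := by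
            have h3 : a * f q.1 < a * q.2 := mul_lt_mul_of_pos_left hq ha'
            linarith
  have hx : ((0 : EuclR p), f 0) ∉ s := by simp [hsdef]
  obtain ⟨φ, hφ⟩ := geometric_hahn_banach_open_point hs_conv hs_open hx
  set c : ℝ := φ ((0 : EuclR p), (1 : ℝ)) with hcdef
  have hdec : ∀ (x : EuclR p) (t : ℝ), φ (x, t) = φ (x, 0) + t * c := by
    intro x t
    have h : (x, t) = (x, (0:ℝ)) + t • ((0 : EuclR p), (1:ℝ)) := by
      simp [Prod.ext_iff]
    rw [h, map_add, φ.map_smul]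
    simp [hcdef]
  have hφ0 : φ ((0 : EuclR p), f 0) = f 0 * c := by
    rw [hdec]; simp [show φ ((0:EuclR p), (0:ℝ)) = 0 from map_zero φ]
  have hc : c < 0 := by
    have hmem : ((0 : EuclR p), f 0 + 1) ∈ s := by simp [hsdef]
    have h := hφ _ hmem
    rw [hdec, hφ0] at h
    simp only [show φ ((0:EuclR p), (0:ℝ)) = 0 from map_zero φ, zero_add] at h
    nlinarith
  have key : ∀ x : EuclR p, φ (x, 0) + f x * c ≤ f 0 * c := by
    intro x
    by_contra hcon
    push_neg at hcon
    set ε : ℝ := (φ (x, 0) + f x * c - f 0 * c) / (2 * (-c)) with hε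
    have hε0 : 0 < ε := div_pos (by linarith) (by linarith)
    have hmem : (x, f x + ε) ∈ s := by simp [hsdef]; linarith
    have h := hφ _ hmem
    rw [hdec, hφ0] at h
    have hεc : ε * (-c) = (φ (x, 0) + f x * c - f 0 * c) / 2 := by
      rw [hε]; field_simp [hc.ne]
    nlinarith
  set ψ : EuclR p →L[ℝ] ℝ :=
    ((-c)⁻¹) • (φ.comp (ContinuousLinearMap.inl ℝ (EuclR p) ℝ)) with hψ
  refine ⟨(InnerProductSpace.toDual ℝ (EuclR p)).symm ψ, ?_⟩
  intro htop
  have hbound : fconj f ((InnerProductSpace.toDual ℝ (EuclR p)).symm ψ)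
      ≤ ((-(f 0) : ℝ) : EReal) := by
    rw [fconj]
    apply iSup_le
    intro w
    rw [EReal.coe_le_coe_iff]
    have hinner : ⟪w, (InnerProductSpace.toDual ℝ (EuclR p)).symm ψ⟫ = ψ w := by
      rw [real_inner_comm]
      exact InnerProductSpace.toDual_symm_apply
    rw [hinner]
    have hψw : ψ w = (-c)⁻¹ * φ (w, 0) := by
      simp [hψ, ContinuousLinearMap.comp_apply]
    have hkw := key w
    have hcpos : 0 < -c := by linarith
    have h2 : (-c)⁻¹ * φ (w, 0) ≤ f w - f 0 := by
      rw [inv_mul_le_iff₀ hcpos]; nlinarith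
    rw [hψw]; linarith
  rw [htop] at hbound
  exact EReal.coe_ne_top _ (top_le_iff.1 hbound)

lemma fconj_combo {p : ℕ} (f : EuclR p → ℝ) {a b : EuclR p} {ra rb : ℝ}
    (ha : fconj f a = (ra : EReal)) (hb : fconj f b = (rb : EReal))
    {t : ℝ} (ht0 : 0 ≤ t) (ht1 : t ≤ 1) :
    fconj f (a + t • (b - a)) ≤ (((1 - t) * ra + t * rb : ℝ) : EReal) := by
  rw [fconj]
  apply iSup_le
  intro w
  rw [EReal.coe_le_coe_iff]
  have h1 : ⟪w, a⟫ - f w ≤ ra := by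
    have := le_fconj f a w; rw [ha] at this; exact_mod_cast this
  have h2 : ⟪w, b⟫ - f w ≤ rb := by
    have := le_fconj f b w; rw [hb] at this; exact_mod_cast this
  have hip : ⟪w, a + t • (b - a)⟫ = ⟪w, a⟫ + t * (⟪w, b⟫ - ⟪w, a⟫) := by
    rw [inner_add_right, real_inner_smul_right, inner_sub_right]
  rw [hip]
  nlinarith [mul_le_mul_of_nonneg_left h1 (by linarith : (0:ℝ) ≤ 1 - t),
    mul_le_mul_of_nonneg_left h2 ht0]

set_option maxHeartbeats 1000000 in
/-- deterministic recovery bound for non-smooth objectives. -/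
theorem nonsmooth_recovery (n d m : ℕ) (f : EuclR n → ℝ)
    (hconv : ConvexOn ℝ Set.univ f) (L lam : ℝ) (hL : 0 ≤ L) (hlam : 0 < lam)
    (hLip : ∀ x y, |f x - f y| ≤ L * ‖x - y‖)
    (A : Matrix (Fin n) (Fin d) ℝ) (S : Matrix (Fin d) (Fin m) ℝ)
    (zs ys : EuclR n)
    (hzs : ∀ z, fconj f zs + ((1 / (2 * lam) * ‖matVec Aᵀ zs‖ ^ 2 : ℝ) : EReal)
        ≤ fconj f z + ((1 / (2 * lam) * ‖matVec Aᵀ z‖ ^ 2 : ℝ) : EReal))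
    (hys : ∀ y, fconj f ys + ((1 / (2 * lam) * ‖projOn (ranM S) (matVec Aᵀ ys)‖ ^ 2 : ℝ) : EReal)
        ≤ fconj f y + ((1 / (2 * lam) * ‖projOn (ranM S) (matVec Aᵀ y)‖ ^ 2 : ℝ) : EReal))
    (xs x1 : EuclR d)
    (hxs : xs = (-(1 / lam)) • matVec Aᵀ zs)
    (hx1 : x1 = (-(1 / lam)) • matVec Aᵀ ys) :
    ‖x1 - xs‖ ≤ 2 * (L / lam) *
        Real.sqrt ((ZfVal f zs A S) ^ 2
          + 1 / 2 * ZfVal f zs A S * ‖(perpCLM (ranM S)).comp (matCLM Aᵀ)‖) ∧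
    2 * (L / lam) *
        Real.sqrt ((ZfVal f zs A S) ^ 2
          + 1 / 2 * ZfVal f zs A S * ‖(perpCLM (ranM S)).comp (matCLM Aᵀ)‖)
      ≤ Real.sqrt 6 * (L / lam) * ‖(perpCLM (ranM S)).comp (matCLM Aᵀ)‖ := by
  classical
  have hcont : Continuous f := by
    have hlw : LipschitzWith (Real.toNNReal L) f := by
      apply LipschitzWith.of_dist_le_mul
      intro x y
      rw [Real.dist_eq, dist_eq_norm]
      calc |f x - f y| ≤ L * ‖x - y‖ := hLip x y
        _ = (Real.toNNReal L : ℝ) * ‖x - y‖ := by rw [Real.coe_toNNReal L hL]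
    exact hlw.continuous
  obtain ⟨g, hg⟩ := exists_fconj_ne_top f hconv hcont
  obtain ⟨rg, hrg⟩ := ereal_ne_top_exists_real (fconj_ne_bot f g) hg
  -- finiteness of fconj at zs and ys
  have hzs_ne : fconj f zs ≠ ⊤ := by
    have h := hzs g
    rw [hrg, ← EReal.coe_add] at h
    intro hx
    rw [hx, EReal.top_add_coe] at h
    exact absurd h (not_le.2 (EReal.coe_lt_top _))
  have hys_ne : fconj f ys ≠ ⊤ := by
    have h := hys g
    rw [hrg, ← EReal.coe_add] at h
    intro hx
    rw [hx, EReal.top_add_coe] at h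
    exact absurd h (not_le.2 (EReal.coe_lt_top _))
  obtain ⟨rz, hrz⟩ := ereal_ne_top_exists_real (fconj_ne_bot f zs) hzs_ne
  obtain ⟨ry, hry⟩ := ereal_ne_top_exists_real (fconj_ne_bot f ys) hys_ne
  have hzL : ‖zs‖ ≤ L := fdom_norm_le hL hLip hzs_ne
  have hyL : ‖ys‖ ≤ L := fdom_norm_le hL hLip hys_ne
  -- linearity helpers
  have hBlin : ∀ (x y : EuclR n) (t : ℝ),
      matVec Aᵀ (x + t • y) = matVec Aᵀ x + t • matVec Aᵀ y := by
    intro x y t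
    unfold matVec
    rw [map_add, _root_.map_smul]
  have hBsub : ∀ (x y : EuclR n), matVec Aᵀ (x - y) = matVec Aᵀ x - matVec Aᵀ y := by
    intro x y
    unfold matVec
    rw [map_sub]
  have hPlin : ∀ (x y : EuclR d) (t : ℝ),
      projOn (ranM S) (x + t • y) = projOn (ranM S) x + t • projOn (ranM S) y := by
    intro x y t
    unfold projOn
    rw [map_add (ranM S).orthogonalProjection, _root_.map_smul, Submodule.coe_add, Submodule.coe_smul]
  have hPsub : ∀ (x y : EuclR d) (t : ℝ),
      projOn (ranM S) (x - t • y) = projOn (ranM S) x - t • projOn (ranM S) y := by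
    intro x y t
    unfold projOn
    rw [map_sub (ranM S).orthogonalProjection, _root_.map_smul, Submodule.coe_sub, Submodule.coe_smul]
  have hPmem : ∀ x : EuclR d, projOn (ranM S) x ∈ ranM S := fun x => SetLike.coe_mem _
  have hPerp : ∀ x : EuclR d, x - projOn (ranM S) x ∈ (ranM S)ᗮ :=
    fun x => (ranM S).sub_starProjection_mem_orthogonal x
  set T := (perpCLM (ranM S)).comp (matCLM Aᵀ) with hTdef
  have hTapp : ∀ x : EuclR n, T x = matVec Aᵀ x - projOn (ranM S) (matVec Aᵀ x) :=
    fun x => rfl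
  set Z := ZfVal f zs A S with hZdef
  have hstep : ∀ t : ℝ, t ∈ Set.Ioo (0:ℝ) 1 →
      0 ≤ 2 * (⟪matVec Aᵀ zs, matVec Aᵀ (ys - zs)⟫
            - ⟪projOn (ranM S) (matVec Aᵀ ys), projOn (ranM S) (matVec Aᵀ (ys - zs))⟫)
          + t * (‖matVec Aᵀ (ys - zs)‖ ^ 2 + ‖projOn (ranM S) (matVec Aᵀ (ys - zs))‖ ^ 2) := by
    intro t ht
    have hz1 := hzs (zs + t • (ys - zs))
    have hy1 := hys (ys + t • (zs - ys))
    obtain ⟨rt, hrt, -, hrtle⟩ := ereal_exists_real (fconj_ne_bot f _)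
      (fconj_combo f hrz hry ht.1.le ht.2.le)
    obtain ⟨rt', hrt', -, hrt'le⟩ := ereal_exists_real (fconj_ne_bot f _)
      (fconj_combo f hry hrz ht.1.le ht.2.le)
    rw [hrz, hrt, ← EReal.coe_add, ← EReal.coe_add, EReal.coe_le_coe_iff] at hz1
    rw [hry, hrt', ← EReal.coe_add, ← EReal.coe_add, EReal.coe_le_coe_iff] at hy1
    have e1 : ‖matVec Aᵀ (zs + t • (ys - zs))‖ ^ 2
        = ‖matVec Aᵀ zs‖ ^ 2 + 2 * t * ⟪matVec Aᵀ zs, matVec Aᵀ (ys - zs)⟫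
          + t ^ 2 * ‖matVec Aᵀ (ys - zs)‖ ^ 2 := by
      rw [hBlin, norm_add_sq_real, real_inner_smul_right, norm_smul,
        Real.norm_eq_abs, mul_pow, sq_abs]
      ring
    have hBy : matVec Aᵀ (ys + t • (zs - ys)) = matVec Aᵀ ys - t • matVec Aᵀ (ys - zs) := by
      rw [hBlin, hBsub, hBsub, smul_sub, smul_sub]
      abel
    have e2 : ‖projOn (ranM S) (matVec Aᵀ (ys + t • (zs - ys)))‖ ^ 2
        = ‖projOn (ranM S) (matVec Aᵀ ys)‖ ^ 2
          - 2 * t * ⟪projOn (ranM S) (matVec Aᵀ ys), projOn (ranM S) (matVec Aᵀ (ys - zs))⟫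
          + t ^ 2 * ‖projOn (ranM S) (matVec Aᵀ (ys - zs))‖ ^ 2 := by
      rw [hBy, hPsub, norm_sub_sq_real, real_inner_smul_right, norm_smul,
        Real.norm_eq_abs, mul_pow, sq_abs]
      ring
    rw [e1] at hz1
    rw [e2] at hy1
    have h0 : 0 ≤ 1 / (2 * lam) *
        (t * (2 * (⟪matVec Aᵀ zs, matVec Aᵀ (ys - zs)⟫
              - ⟪projOn (ranM S) (matVec Aᵀ ys), projOn (ranM S) (matVec Aᵀ (ys - zs))⟫)
            + t * (‖matVec Aᵀ (ys - zs)‖ ^ 2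
              + ‖projOn (ranM S) (matVec Aᵀ (ys - zs))‖ ^ 2))) := by
      linarith [hz1, hy1, hrtle, hrt'le]
    have hl : 0 < 1 / (2 * lam) := by positivity
    have h0' := (mul_nonneg_iff_of_pos_left hl).1 h0
    exact (mul_nonneg_iff_of_pos_left ht.1).1 h0'
  have hmono : ⟪projOn (ranM S) (matVec Aᵀ ys), projOn (ranM S) (matVec Aᵀ (ys - zs))⟫
      ≤ ⟪matVec Aᵀ zs, matVec Aᵀ (ys - zs)⟫ := by
    set a : ℝ := ⟪matVec Aᵀ zs, matVec Aᵀ (ys - zs)⟫ with ha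
    set b : ℝ := ⟪projOn (ranM S) (matVec Aᵀ ys), projOn (ranM S) (matVec Aᵀ (ys - zs))⟫ with hb
    set C : ℝ := ‖matVec Aᵀ (ys - zs)‖ ^ 2 + ‖projOn (ranM S) (matVec Aᵀ (ys - zs))‖ ^ 2 with hC
    by_contra hcon
    push_neg at hcon
    have hC0 : 0 ≤ C := by rw [hC]; positivity
    set t0 : ℝ := min (1/2) ((b - a) / (C + 1)) with ht0
    have ht0pos : 0 < t0 := lt_min (by norm_num) (div_pos (by linarith) (by linarith))
    have ht0lt : t0 < 1 := lt_of_le_of_lt (min_le_left _ _) (by norm_num)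
    have hst := hstep t0 ⟨ht0pos, ht0lt⟩
    have h1 : t0 ≤ (b - a) / (C + 1) := min_le_right _ _
    have h2 : t0 * (C + 1) ≤ b - a := by
      rw [← le_div_iff₀ (by linarith : (0:ℝ) < C + 1)]
      exact h1
    nlinarith [hst, h2, ht0pos]
  -- splitting inner products along the projection
  have hsplit : ∀ u v : EuclR d, ⟪u, v⟫ =
      ⟪projOn (ranM S) u, projOn (ranM S) v⟫
        + ⟪u - projOn (ranM S) u, v - projOn (ranM S) v⟫ := by
    intro u v
    have h1 : ⟪u - projOn (ranM S) u, projOn (ranM S) v⟫ = 0 := by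
      rw [real_inner_comm]
      exact Submodule.inner_right_of_mem_orthogonal (hPmem v) (hPerp u)
    have h2 : ⟪projOn (ranM S) u, v - projOn (ranM S) v⟫ = 0 :=
      Submodule.inner_right_of_mem_orthogonal (hPmem u) (hPerp v)
    have e : ⟪u - projOn (ranM S) u, v - projOn (ranM S) v⟫
        = ⟪u, v⟫ - ⟪u, projOn (ranM S) v⟫ - ⟪projOn (ranM S) u, v⟫
          + ⟪projOn (ranM S) u, projOn (ranM S) v⟫ := by
      rw [inner_sub_left, inner_sub_right, inner_sub_right]
      ring
    have e2 : ⟪u, projOn (ranM S) v⟫ = ⟪projOn (ranM S) u, projOn (ranM S) v⟫ := by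
      have h1' := h1
      rw [inner_sub_left] at h1'
      linarith
    have e3 : ⟪projOn (ranM S) u, v⟫ = ⟪projOn (ranM S) u, projOn (ranM S) v⟫ := by
      have h2' := h2
      rw [inner_sub_right] at h2'
      linarith
    rw [e, e2, e3]
    ring
  -- key bound
  have hkey : ‖matVec Aᵀ (ys - zs)‖ ^ 2 ≤ ⟪T (ys - zs), T ys⟫ := by
    have h1 : ⟪matVec Aᵀ (ys - zs), matVec Aᵀ ys⟫ - ⟪matVec Aᵀ (ys - zs), matVec Aᵀ zs⟫
        = ‖matVec Aᵀ (ys - zs)‖ ^ 2 := by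
      rw [← inner_sub_right, ← hBsub, real_inner_self_eq_norm_sq]
    have h2 := hsplit (matVec Aᵀ (ys - zs)) (matVec Aᵀ ys)
    have h3 : ⟪projOn (ranM S) (matVec Aᵀ (ys - zs)), projOn (ranM S) (matVec Aᵀ ys)⟫
        = ⟪projOn (ranM S) (matVec Aᵀ ys), projOn (ranM S) (matVec Aᵀ (ys - zs))⟫ :=
      real_inner_comm _ _
    have h4 : ⟪matVec Aᵀ (ys - zs), matVec Aᵀ zs⟫ = ⟪matVec Aᵀ zs, matVec Aᵀ (ys - zs)⟫ :=
      real_inner_comm _ _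
    rw [hTapp, hTapp]
    linarith [h1, h2, h3, h4, hmono]
  -- Z facts
  set Sset : Set ℝ := ((fun Δ => ‖matVec Aᵀ Δ - projOn (ranM S) (matVec Aᵀ Δ)‖) ''
    (tcone f zs ∩ Metric.closedBall 0 1)) with hSset
  have hZS : Z = sSup Sset := rfl
  have hub : ∀ x ∈ Sset, x ≤ ‖T‖ := by
    rintro x ⟨Δ', ⟨-, hball⟩, rfl⟩
    have hb : ‖Δ'‖ ≤ 1 := by
      rw [Metric.mem_closedBall, dist_zero_right] at hball
      exact hball
    calc ‖matVec Aᵀ Δ' - projOn (ranM S) (matVec Aᵀ Δ')‖ = ‖T Δ'‖ := by rw [hTapp]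
      _ ≤ ‖T‖ * ‖Δ'‖ := T.le_opNorm Δ'
      _ ≤ ‖T‖ * 1 := mul_le_mul_of_nonneg_left hb (norm_nonneg T)
      _ = ‖T‖ := mul_one _
  have hZbdd : BddAbove Sset := ⟨‖T‖, hub⟩
  have hZle : Z ≤ ‖T‖ := by
    rw [hZS]
    exact Real.sSup_le hub (norm_nonneg T)
  have hys_dom : ys ∈ fdom f := hys_ne
  have hzs_dom : zs ∈ fdom f := hzs_ne
  have hZ0 : 0 ≤ Z := by
    rw [hZS]
    apply le_csSup hZbdd
    refine ⟨0, ⟨⟨0, le_refl 0, zs, hzs_dom, by rw [zero_smul]⟩, by simp⟩, ?_⟩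
    show ‖matVec Aᵀ (0 : EuclR n) - projOn (ranM S) (matVec Aᵀ (0 : EuclR n))‖ = 0
    have h0 : matVec Aᵀ (0 : EuclR n) = 0 := by unfold matVec; exact map_zero _
    have hp0 : projOn (ranM S) (0 : EuclR d) = 0 := by
      unfold projOn; rw [map_zero]; rfl
    rw [h0, hp0, sub_zero, norm_zero]
  have hTD : ‖T (ys - zs)‖ ≤ 2 * L * Z := by
    rcases eq_or_ne (ys - zs) 0 with h | h
    · rw [h, map_zero, norm_zero]
      positivity
    · have hn : 0 < ‖ys - zs‖ := norm_pos_iff.2 h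
      have hmemD : (‖ys - zs‖⁻¹ • (ys - zs)) ∈ tcone f zs ∩ Metric.closedBall 0 1 := by
        constructor
        · exact ⟨‖ys - zs‖⁻¹, inv_nonneg.2 hn.le, ys, hys_dom, rfl⟩
        · rw [Metric.mem_closedBall, dist_zero_right, norm_smul, Real.norm_eq_abs,
            abs_of_nonneg (inv_nonneg.2 hn.le), inv_mul_cancel₀ hn.ne']
      have hv : ‖T (‖ys - zs‖⁻¹ • (ys - zs))‖ ≤ Z := by
        rw [hZS]
        apply le_csSup hZbdd
        exact ⟨_, hmemD, (hTapp _).symm ▸ rfl⟩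
      have hTs : T (ys - zs) = ‖ys - zs‖ • T (‖ys - zs‖⁻¹ • (ys - zs)) := by
        rw [_root_.map_smul, smul_smul, mul_inv_cancel₀ hn.ne', one_smul]
      rw [hTs, norm_smul, Real.norm_eq_abs, abs_of_nonneg hn.le]
      have hD2L : ‖ys - zs‖ ≤ 2 * L := by
        calc ‖ys - zs‖ ≤ ‖ys‖ + ‖zs‖ := norm_sub_le _ _
          _ ≤ 2 * L := by linarith
      nlinarith [hv, hZ0, hn.le, norm_nonneg (T (‖ys - zs‖⁻¹ • (ys - zs)))]
  have hTys : ‖T ys‖ ≤ 2 * L * Z + ‖T‖ * L := by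
    have h1 : T ys = T (ys - zs) + T zs := by
      rw [← map_add]
      congr 1
      abel
    calc ‖T ys‖ = ‖T (ys - zs) + T zs‖ := by rw [← h1]
      _ ≤ ‖T (ys - zs)‖ + ‖T zs‖ := norm_add_le _ _
      _ ≤ 2 * L * Z + ‖T‖ * L := by
          apply add_le_add hTD
          calc ‖T zs‖ ≤ ‖T‖ * ‖zs‖ := T.le_opNorm zs
            _ ≤ ‖T‖ * L := mul_le_mul_of_nonneg_left hzL (norm_nonneg T)
  -- final numeric bound
  have hfinal : ‖matVec Aᵀ (ys - zs)‖ ^ 2 ≤ 4 * L ^ 2 * (Z ^ 2 + 1 / 2 * Z * ‖T‖) := by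
    have h1 : ‖matVec Aᵀ (ys - zs)‖ ^ 2 ≤ ‖T (ys - zs)‖ * ‖T ys‖ :=
      le_trans hkey (real_inner_le_norm _ _)
    have h2 : ‖T (ys - zs)‖ * ‖T ys‖ ≤ (2 * L * Z) * (2 * L * Z + ‖T‖ * L) := by
      apply mul_le_mul hTD hTys (norm_nonneg _)
      positivity
    nlinarith [h1, h2]
  have hBn : ‖matVec Aᵀ (ys - zs)‖ ≤ 2 * L * Real.sqrt (Z ^ 2 + 1 / 2 * Z * ‖T‖) := by
    have h1 : ‖matVec Aᵀ (ys - zs)‖ = Real.sqrt (‖matVec Aᵀ (ys - zs)‖ ^ 2) := by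
      rw [Real.sqrt_sq (norm_nonneg _)]
    rw [h1]
    calc Real.sqrt (‖matVec Aᵀ (ys - zs)‖ ^ 2)
        ≤ Real.sqrt (4 * L ^ 2 * (Z ^ 2 + 1 / 2 * Z * ‖T‖)) :=
          Real.sqrt_le_sqrt hfinal
      _ = 2 * L * Real.sqrt (Z ^ 2 + 1 / 2 * Z * ‖T‖) := by
          rw [show (4:ℝ) * L ^ 2 = (2 * L) ^ 2 by ring,
            Real.sqrt_mul (sq_nonneg _), Real.sqrt_sq (by positivity)]
  have hnorm : ‖x1 - xs‖ = (1 / lam) * ‖matVec Aᵀ (ys - zs)‖ := by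
    have hx : x1 - xs = (-(1 / lam)) • matVec Aᵀ (ys - zs) := by
      rw [hx1, hxs, ← smul_sub, hBsub]
    rw [hx, norm_smul, Real.norm_eq_abs, abs_neg,
      abs_of_nonneg (by positivity : (0:ℝ) ≤ 1/lam)]
  constructor
  · rw [hnorm]
    calc (1 / lam) * ‖matVec Aᵀ (ys - zs)‖
        ≤ (1 / lam) * (2 * L * Real.sqrt (Z ^ 2 + 1 / 2 * Z * ‖T‖)) :=
          mul_le_mul_of_nonneg_left hBn (by positivity)
      _ = 2 * (L / lam) * Real.sqrt (Z ^ 2 + 1 / 2 * Z * ‖T‖) := by ring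
  · have h32 : Z ^ 2 + 1 / 2 * Z * ‖T‖ ≤ 3 / 2 * ‖T‖ ^ 2 := by
      nlinarith [hZle, hZ0, norm_nonneg T]
    have hs6 : (2:ℝ) * Real.sqrt (3/2) = Real.sqrt 6 := by
      have h := Real.sqrt_mul (by norm_num : (0:ℝ) ≤ 4) (3/2)
      have h4 : Real.sqrt 4 = 2 := by
        rw [show (4:ℝ) = 2 ^ 2 by norm_num, Real.sqrt_sq (by norm_num)]
      rw [show (4:ℝ) * (3/2) = 6 by norm_num, h4] at h
      linarith [h]
    calc 2 * (L / lam) * Real.sqrt (Z ^ 2 + 1 / 2 * Z * ‖T‖)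
        ≤ 2 * (L / lam) * Real.sqrt (3 / 2 * ‖T‖ ^ 2) := by
          apply mul_le_mul_of_nonneg_left (Real.sqrt_le_sqrt h32) (by positivity)
      _ = 2 * (L / lam) * (Real.sqrt (3/2) * ‖T‖) := by
          rw [Real.sqrt_mul (by norm_num), Real.sqrt_sq (norm_nonneg _)]
      _ = (2 * Real.sqrt (3/2)) * (L / lam) * ‖T‖ := by ring
      _ = Real.sqrt 6 * (L / lam) * ‖T‖ := by rw [hs6]
end
end
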